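/- Let E be a real vector space, A ⊆ E star-shaped, and let C ⊆ cone(Aᶜ) be a cone (λ • z ∈ C for every z ∈ C and λ ≥ 0) such that both A ∩ C and Aᶜ ∩ C are convex. Then the Minkowski gauge of A is additive on C: 𝒟_A(x + y) = 𝒟_A(x) + 𝒟_A(y) for all x, y ∈ C (in [0,∞]). -/

import Mathlib

open ENNReal

/-- The Minkowski gauge of a set `A` in a real vector space, with values in `[0,∞]`
(the infimum of the empty set being `∞`). -/
noncomputable def mgauge {E : Type*} [AddCommGroup E] [Module ℝ E] (A : Set E) (x : E) : ℝ≥0∞ :=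
  sInf {r : ℝ≥0∞ | ∃ m : ℝ, 0 < m ∧ m⁻¹ • x ∈ A ∧ r = ENNReal.ofReal m}

/-- The conic hull of a set `S`: `{λ • z : λ ≥ 0, z ∈ S} ∪ {0}`. -/
def conicHull {E : Type*} [AddCommGroup E] [Module ℝ E] (S : Set E) : Set E :=
  {y : E | ∃ l : ℝ, 0 ≤ l ∧ ∃ z ∈ S, y = l • z} ∪ {0}

theorem stmt_13 {E : Type*} [AddCommGroup E] [Module ℝ E] (A C : Set E)
    (hstar : ∀ x ∈ A, ∀ l ∈ Set.Icc (0 : ℝ) 1, l • x ∈ A)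
    (hC : ∀ z ∈ C, ∀ l : ℝ, 0 ≤ l → l • z ∈ C)
    (hCsub : C ⊆ conicHull Aᶜ)
    (hconvA : Convex ℝ (A ∩ C)) (hconvAc : Convex ℝ (Aᶜ ∩ C))
    (x y : E) (hx : x ∈ C) (hy : y ∈ C) :
    mgauge A (x + y) = mgauge A x + mgauge A y := by
  classical
  -- Case `A = ∅`
  by_cases hA : A = ∅
  · have hinf : ∀ v : E, mgauge A v = ⊤ := by
      intro v
      have hset : {r : ℝ≥0∞ | ∃ m : ℝ, 0 < m ∧ m⁻¹ • v ∈ A ∧ r = ENNReal.ofReal m} = ∅ := by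
        ext r; simp [hA]
      rw [mgauge, hset, sInf_empty]
    simp [hinf]
  have h0 : (0 : E) ∈ A := by
    obtain ⟨a, ha⟩ := Set.nonempty_iff_ne_empty.2 hA
    simpa using hstar a ha 0 ⟨le_refl 0, zero_le_one⟩
  have hzero : mgauge A (0 : E) = 0 := by
    refine le_antisymm ?_ zero_le
    refine ENNReal.le_of_forall_pos_le_add fun ε hε _ => ?_
    have hle : mgauge A (0 : E) ≤ ENNReal.ofReal (ε : ℝ) :=
      sInf_le ⟨(ε : ℝ), by exact_mod_cast hε, by simpa using h0, rfl⟩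
    simpa [ENNReal.ofReal_coe_nnreal] using hle
  by_cases hx0 : x = 0
  · simp [hx0, hzero]
  by_cases hy0 : y = 0
  · simp [hy0, hzero]
  -- positivity of the gauge on `C \ {0}`
  have hlb : ∀ v ∈ C, v ≠ 0 → 0 < mgauge A v := by
    intro v hv hv0
    have hmem := hCsub hv
    simp only [conicHull, Set.mem_union, Set.mem_setOf_eq, Set.mem_singleton_iff] at hmem
    rcases hmem with ⟨l, hl0, z, hz, rfl⟩ | h
    · have hl : 0 < l := hl0.lt_of_ne (by rintro rfl; simp at hv0)
      refine lt_of_lt_of_le (ENNReal.ofReal_pos.2 hl) (le_sInf ?_)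
      rintro r ⟨m, hm, hmA, rfl⟩
      refine ENNReal.ofReal_le_ofReal ?_
      by_contra hml
      push_neg at hml
      have hz' : z ∈ A := by
        have hrep : z = (m / l) • (m⁻¹ • (l • z)) := by
          rw [smul_smul, smul_smul,
            show m / l * m⁻¹ * l = 1 by field_simp <;> ring, one_smul]
        rw [hrep]
        exact hstar _ hmA _ ⟨by positivity, by rw [div_le_one hl]; exact hml.le⟩
      exact hz hz'
    · exact absurd h hv0
  -- membership of sums
  have hsum : ∀ (u v : E), u ∈ C → v ∈ C → ∀ m n : ℝ, 0 < m → 0 < n →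
      m⁻¹ • u ∈ A → n⁻¹ • v ∈ A → (m + n)⁻¹ • (u + v) ∈ A := by
    intro u v hu hv m n hm hn hmu hnv
    have hp : m⁻¹ • u ∈ A ∩ C := ⟨hmu, hC u hu _ (by positivity)⟩
    have hq : n⁻¹ • v ∈ A ∩ C := ⟨hnv, hC v hv _ (by positivity)⟩
    have hmn : 0 < m + n := by positivity
    have key := hconvA hp hq (a := m / (m + n)) (b := n / (m + n))
      (by positivity) (by positivity)
      (by rw [← add_div, div_self hmn.ne'])
    have heq : (m / (m + n)) • (m⁻¹ • u) + (n / (m + n)) • (n⁻¹ • v)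
        = (m + n)⁻¹ • (u + v) := by
      rw [smul_smul, smul_smul, smul_add]
      congr 1
      · congr 1
        field_simp <;> ring
      · congr 1
        field_simp <;> ring
    rw [heq] at key
    exact key.1
  -- subadditivity
  have hsub : mgauge A (x + y) ≤ mgauge A x + mgauge A y := by
    rcases eq_top_or_lt_top (mgauge A x) with hgx | hgx
    · simp [hgx]
    rcases eq_top_or_lt_top (mgauge A y) with hgy | hgy
    · simp [hgy]
    refine ENNReal.le_of_forall_pos_le_add fun ε hε _ => ?_
    have hε2 : ((ε : ℝ≥0∞) / 2) ≠ 0 := by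
      simp [ENNReal.div_eq_zero_iff]
      exact_mod_cast hε.ne'
    have hx' : mgauge A x < mgauge A x + (ε : ℝ≥0∞) / 2 := ENNReal.lt_add_right hgx.ne hε2
    have hy' : mgauge A y < mgauge A y + (ε : ℝ≥0∞) / 2 := ENNReal.lt_add_right hgy.ne hε2
    rw [mgauge] at hx' hy'
    obtain ⟨r, hr, hrlt⟩ := sInf_lt_iff.1 hx'
    obtain ⟨s, hs, hslt⟩ := sInf_lt_iff.1 hy'
    obtain ⟨m, hm, hmA, rfl⟩ := hr
    obtain ⟨n, hn, hnA, rfl⟩ := hs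
    have hstep : mgauge A (x + y) ≤ ENNReal.ofReal (m + n) :=
      sInf_le ⟨m + n, by positivity, hsum x y hx hy m n hm hn hmA hnA, rfl⟩
    calc mgauge A (x + y) ≤ ENNReal.ofReal (m + n) := hstep
      _ = ENNReal.ofReal m + ENNReal.ofReal n := ENNReal.ofReal_add hm.le hn.le
      _ ≤ (mgauge A x + (ε : ℝ≥0∞) / 2) + (mgauge A y + (ε : ℝ≥0∞) / 2) :=
          add_le_add hrlt.le hslt.le
      _ = mgauge A x + mgauge A y + (ε : ℝ≥0∞) := by
          rw [add_add_add_comm, ENNReal.add_halves]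
  -- superadditivity
  have hsuper : mgauge A x + mgauge A y ≤ mgauge A (x + y) := by
    rw [mgauge]
    refine le_sInf ?_
    rintro r ⟨m, hm, hmA, rfl⟩
    by_contra hcon
    push_neg at hcon
    have hgx0 : 0 < mgauge A x := hlb x hx hx0
    have hgy0 : 0 < mgauge A y := hlb y hy hy0
    have hm0 : (0 : ℝ≥0∞) < ENNReal.ofReal m := ENNReal.ofReal_pos.2 hm
    set gx' := min (mgauge A x) (ENNReal.ofReal m) with hgx'def
    set gy' := min (mgauge A y) (ENNReal.ofReal m) with hgy'def
    have hgx'0 : 0 < gx' := lt_min hgx0 hm0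
    have hgy'0 : 0 < gy' := lt_min hgy0 hm0
    have hgx't : gx' ≠ ⊤ := ((min_le_right _ _).trans_lt ofReal_lt_top).ne
    have hgy't : gy' ≠ ⊤ := ((min_le_right _ _).trans_lt ofReal_lt_top).ne
    have hmlt : ENNReal.ofReal m < gx' + gy' := by
      rcases le_total (mgauge A x) (ENNReal.ofReal m) with h1 | h1 <;>
        rcases le_total (mgauge A y) (ENNReal.ofReal m) with h2 | h2
      · rw [hgx'def, hgy'def, min_eq_left h1, min_eq_left h2]; exact hcon
      · rw [hgx'def, hgy'def, min_eq_left h1, min_eq_right h2]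
        have := ENNReal.lt_add_right (a := ENNReal.ofReal m) ofReal_ne_top hgx0.ne'
        rwa [add_comm] at this
      · rw [hgx'def, hgy'def, min_eq_right h1, min_eq_left h2]
        exact ENNReal.lt_add_right ofReal_ne_top hgy0.ne'
      · rw [hgx'def, hgy'def, min_eq_right h1, min_eq_right h2]
        exact ENNReal.lt_add_right ofReal_ne_top hm0.ne'
    set rx := gx'.toReal with hrxdef
    set ry := gy'.toReal with hrydef
    have hrx : 0 < rx := ENNReal.toReal_pos hgx'0.ne' hgx't
    have hry : 0 < ry := ENNReal.toReal_pos hgy'0.ne' hgy't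
    have hmr : m < rx + ry := by
      have hne : gx' + gy' ≠ ⊤ := by
        simp [ENNReal.add_eq_top, hgx't, hgy't]
      have h := (ENNReal.toReal_lt_toReal ofReal_ne_top hne).2 hmlt
      rwa [ENNReal.toReal_ofReal hm.le, ENNReal.toReal_add hgx't hgy't] at h
    set a := m * rx / (rx + ry) with hadef
    set b := m * ry / (rx + ry) with hbdef
    have hab : a + b = m := by
      rw [hadef, hbdef]
      field_simp
    have ha0 : 0 < a := by positivity
    have hb0 : 0 < b := by positivity
    have harx : a < rx := by
      rw [hadef, div_lt_iff₀ (by positivity)]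
      nlinarith
    have hbry : b < ry := by
      rw [hbdef, div_lt_iff₀ (by positivity)]
      nlinarith
    have hax : ENNReal.ofReal a < mgauge A x :=
      calc ENNReal.ofReal a < ENNReal.ofReal rx := (ENNReal.ofReal_lt_ofReal_iff hrx).2 harx
        _ = gx' := by rw [hrxdef, ENNReal.ofReal_toReal hgx't]
        _ ≤ mgauge A x := min_le_left _ _
    have hby : ENNReal.ofReal b < mgauge A y :=
      calc ENNReal.ofReal b < ENNReal.ofReal ry := (ENNReal.ofReal_lt_ofReal_iff hry).2 hbry
        _ = gy' := by rw [hrydef, ENNReal.ofReal_toReal hgy't]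
        _ ≤ mgauge A y := min_le_left _ _
    have haxA : a⁻¹ • x ∉ A := by
      intro hmem
      have : mgauge A x ≤ ENNReal.ofReal a := sInf_le ⟨a, ha0, hmem, rfl⟩
      exact absurd this (not_le.2 hax)
    have hbyA : b⁻¹ • y ∉ A := by
      intro hmem
      have : mgauge A y ≤ ENNReal.ofReal b := sInf_le ⟨b, hb0, hmem, rfl⟩
      exact absurd this (not_le.2 hby)
    have hp : a⁻¹ • x ∈ Aᶜ ∩ C := ⟨haxA, hC x hx _ (by positivity)⟩
    have hq : b⁻¹ • y ∈ Aᶜ ∩ C := ⟨hbyA, hC y hy _ (by positivity)⟩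
    have key := hconvAc hp hq (a := a / m) (b := b / m)
      (by positivity) (by positivity)
      (by rw [← add_div, hab, div_self hm.ne'])
    have heq : (a / m) • (a⁻¹ • x) + (b / m) • (b⁻¹ • y) = m⁻¹ • (x + y) := by
      rw [smul_smul, smul_smul, smul_add]
      congr 1
      · congr 1
        field_simp <;> ring
      · congr 1
        field_simp <;> ring
    rw [heq] at key
    exact key.1 hmA
  exact le_antisymm hsub hsuper
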